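/- For the $HLS_3$ inner double sum: $\sum_{q_1=0}^{u}\sum_{q_2=0}^{u-q_1}(-1)^{q_1}\binom{u}{q_1\ q_2}\binom{k_1+q_1}{j-q_2}_* R(q_1) = \binom{k_1+u}{j}_* \sum_{q_1=0}^{u}(-1)^{q_1}\binom{u}{q_1} R(q_1)$ for any function $R : \{0,\ldots,u\} \to \mathbb{R}$, integers $k_1 \geq 0$, $u \geq 0$ and any integer $j$. -/

import Mathlib

/-- Starred binomial coefficient: `a.choose b` if `0 ≤ b ≤ a`, else `0`. -/
def bstar (a : ℕ) (b : ℤ) : ℤ :=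
  if 0 ≤ b ∧ b ≤ (a : ℤ) then a.choose b.toNat else 0

lemma bstar_key (m n : ℕ) (j : ℤ) :
    ∑ i ∈ Finset.range (m + 1), (m.choose i : ℤ) * bstar n (j - i) = bstar (m + n) j := by
  by_cases hj : 0 ≤ j
  · by_cases hj2 : j ≤ (m : ℤ) + n
    · obtain ⟨J, hJ⟩ : ∃ J : ℕ, (J : ℤ) = j := ⟨j.toNat, Int.toNat_of_nonneg hj⟩
      subst hJ
      have hJle : J ≤ m + n := by omega
      have hrhs : bstar (m + n) (J : ℤ) = ((m + n).choose J : ℤ) := by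
        unfold bstar
        rw [if_pos ⟨hj, by push_cast; omega⟩]
        rw [Int.toNat_natCast]
      rw [hrhs]
      have hterm : ∀ i : ℕ, (m.choose i : ℤ) * bstar n ((J : ℤ) - i)
          = ((m.choose i * (if i ≤ J then n.choose (J - i) else 0) : ℕ) : ℤ) := by
        intro i
        unfold bstar
        by_cases hi : i ≤ J
        · by_cases hn : J - i ≤ n
          · rw [if_pos ⟨by omega, by omega⟩, if_pos hi]
            have : ((J : ℤ) - i).toNat = J - i := by omega
            rw [this]; push_cast; ring
          · rw [if_neg (by omega), if_pos hi]
            rw [Nat.choose_eq_zero_of_lt (show n < J - i by omega)]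
            push_cast; ring
        · rw [if_neg (by omega), if_neg hi]
          push_cast; ring
      simp only [hterm]
      rw [← Nat.cast_sum]
      congr 1
      have hvan := Nat.add_choose_eq m n J
      rw [hvan, Finset.Nat.sum_antidiagonal_eq_sum_range_succ_mk]
      -- now: ∑ i ∈ range (m+1), m.choose i * (if i ≤ J then n.choose (J-i) else 0)
      --    = ∑ a ∈ range (J+1), m.choose a * n.choose (J-a)
      have h1 : ∀ N, m ≤ N → ∑ i ∈ Finset.range (m + 1),
          m.choose i * (if i ≤ J then n.choose (J - i) else 0)
          = ∑ i ∈ Finset.range (N + 1),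
          m.choose i * (if i ≤ J then n.choose (J - i) else 0) := by
        intro N hN
        apply Finset.sum_subset
        · intro x hx; simp only [Finset.mem_range] at *; omega
        · intro x _ hx
          simp only [Finset.mem_range, not_lt] at hx
          rw [Nat.choose_eq_zero_of_lt (show m < x by omega)]; ring
      have h2 : ∀ N, J ≤ N → ∑ a ∈ Finset.range (J + 1),
          m.choose a * n.choose (J - a)
          = ∑ i ∈ Finset.range (N + 1),
          m.choose i * (if i ≤ J then n.choose (J - i) else 0) := by
        intro N hN
        have : ∑ a ∈ Finset.range (J + 1), m.choose a * n.choose (J - a)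
            = ∑ a ∈ Finset.range (J + 1),
              m.choose a * (if a ≤ J then n.choose (J - a) else 0) := by
          apply Finset.sum_congr rfl
          intro x hx
          simp only [Finset.mem_range] at hx
          rw [if_pos (by omega)]
        rw [this]
        apply Finset.sum_subset
        · intro x hx; simp only [Finset.mem_range] at *; omega
        · intro x _ hx
          simp only [Finset.mem_range, not_lt] at hx
          rw [if_neg (by omega)]; ring
      rw [h1 (max m J) (le_max_left _ _), h2 (max m J) (le_max_right _ _)]
    · have hrhs : bstar (m + n) j = 0 := by
        unfold bstar; rw [if_neg (by push_cast; omega)]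
      rw [hrhs]
      apply Finset.sum_eq_zero
      intro i hi
      simp only [Finset.mem_range] at hi
      have : bstar n (j - i) = 0 := by
        unfold bstar; rw [if_neg (by omega)]
      rw [this]; ring
  · have hrhs : bstar (m + n) j = 0 := by
      unfold bstar; rw [if_neg (by omega)]
    rw [hrhs]
    apply Finset.sum_eq_zero
    intro i hi
    have : bstar n (j - i) = 0 := by
      unfold bstar
      rw [if_neg (by have : (0:ℤ) ≤ i := Int.ofNat_nonneg i; omega)]
    rw [this]; ring

/-- The reduction step (semplificata): the inner double sum factors, via
`∑_{q₂=0}^{u-q₁} C(u-q₁,q₂) C*(k₁+q₁, j-q₂) = C*(k₁+u, j)`, as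
`C*(k₁+u, j)` times the alternating sum of `R`. -/
theorem hls3_double_sum_reduction (u k1 : ℕ) (j : ℤ) (R : ℕ → ℝ) :
    ∑ q1 ∈ Finset.range (u + 1), ∑ q2 ∈ Finset.range (u - q1 + 1),
      (-1 : ℝ) ^ q1 * ((u.choose q1 * (u - q1).choose q2 : ℕ) : ℝ) *
        (bstar (k1 + q1) (j - (q2 : ℤ)) : ℝ) * R q1
      = (bstar (k1 + u) j : ℝ) *
        ∑ q1 ∈ Finset.range (u + 1), (-1 : ℝ) ^ q1 * (u.choose q1 : ℝ) * R q1 := by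
  rw [Finset.mul_sum]
  apply Finset.sum_congr rfl
  intro q1 hq1
  simp only [Finset.mem_range] at hq1
  have hq1' : q1 ≤ u := by omega
  have key := bstar_key (u - q1) (k1 + q1) j
  have heq : u - q1 + (k1 + q1) = k1 + u := by omega
  rw [heq] at key
  have keyR : ∑ q2 ∈ Finset.range (u - q1 + 1),
      ((u - q1).choose q2 : ℝ) * (bstar (k1 + q1) (j - q2) : ℝ) = (bstar (k1 + u) j : ℝ) := by
    have := congrArg (fun z : ℤ => (z : ℝ)) key
    push_cast at this ⊢
    exact this
  calc ∑ q2 ∈ Finset.range (u - q1 + 1),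
      (-1 : ℝ) ^ q1 * ((u.choose q1 * (u - q1).choose q2 : ℕ) : ℝ) *
        (bstar (k1 + q1) (j - (q2 : ℤ)) : ℝ) * R q1
      = ((-1 : ℝ) ^ q1 * (u.choose q1 : ℝ) * R q1) *
        ∑ q2 ∈ Finset.range (u - q1 + 1),
          ((u - q1).choose q2 : ℝ) * (bstar (k1 + q1) (j - q2) : ℝ) := by
        rw [Finset.mul_sum]
        apply Finset.sum_congr rfl
        intro q2 _
        push_cast
        ring
    _ = (bstar (k1 + u) j : ℝ) * ((-1 : ℝ) ^ q1 * (u.choose q1 : ℝ) * R q1) := by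
        rw [keyR]; ring
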